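/- For each p ∈ (0,∞] (with 𝕜 = ℝ or ℂ) there exists a 𝕜-subspace V of the sequence space 𝕜^ℕ with V ⊆ ℓ_p, dim V = 𝔠, and such that every nonzero x ∈ V has only finitely many zero coordinates, i.e. V \ {0} ⊆ Z(ℓ_p). In particular, Z(ℓ_p) is maximal lineable. -/
import Mathlib


open Filter
open scoped ENNReal

/-- Membership in `ℓ_p` for `p ∈ (0,∞]`: for `p = ∞` boundedness, for
`p < ∞` summability of `‖x n‖^p`. -/
def InLp {𝕜 : Type} [RCLike 𝕜] (p : ℝ≥0∞) (x : ℕ → 𝕜) : Prop :=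
  if p = ⊤ then ∃ C : ℝ, ∀ n, ‖x n‖ ≤ C
  else Summable (fun n => ‖x n‖ ^ p.toReal)

namespace Stmt4Aux

variable {𝕜 : Type} [RCLike 𝕜]

noncomputable def f (t : Set.Ioo (0:ℝ) 1) : ℕ → 𝕜 := fun n => ((t : ℝ) : 𝕜) ^ n

lemma eval_comb (c : Set.Ioo (0:ℝ) 1 →₀ 𝕜) (n : ℕ) :
    (c.sum fun i a => a • (f i : ℕ → 𝕜)) n = ∑ t ∈ c.support, c t * ((t : ℝ) : 𝕜) ^ n := by
  rw [Finsupp.sum, Finset.sum_apply]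
  simp [f, Pi.smul_apply, smul_eq_mul]

/-- Key lemma: a nontrivial combination has finite zero set. -/
lemma key (c : Set.Ioo (0:ℝ) 1 →₀ 𝕜) (hc : c ≠ 0) :
    {n : ℕ | (∑ t ∈ c.support, c t * ((t : ℝ) : 𝕜) ^ n) = 0}.Finite := by
  have hne : c.support.Nonempty := Finsupp.support_nonempty_iff.2 hc
  set T := c.support.max' hne with hT
  have hTmem : T ∈ c.support := c.support.max'_mem hne
  have hcT : c T ≠ 0 := Finsupp.mem_support_iff.1 hTmem
  have hT0 : (0:ℝ) < (T : ℝ) := T.2.1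
  have hT1 : (T : ℝ) < 1 := T.2.2
  set y : ℕ → 𝕜 := fun n => ∑ t ∈ c.support, c t * (((t : ℝ) / (T : ℝ) : ℝ) : 𝕜) ^ n with hy
  have hlim : Tendsto y atTop (nhds (c T)) := by
    have : Tendsto y atTop (nhds (∑ t ∈ c.support, if t = T then c t else 0)) := by
      apply tendsto_finset_sum
      intro t ht
      by_cases h : t = T
      · simp only [if_pos h, h]
        have : ∀ n : ℕ, c T * (((T : ℝ) / (T : ℝ) : ℝ) : 𝕜) ^ n = c T := by
          intro n
          rw [div_self (ne_of_gt hT0)]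
          simp
        simp only [this]
        exact tendsto_const_nhds
      · simp only [if_neg h]
        have hlt : (t : ℝ) < (T : ℝ) := by
          have hle : t ≤ T := c.support.le_max' t ht
          exact lt_of_le_of_ne hle (by exact_mod_cast Subtype.coe_injective.ne h)
        have hnorm : ‖(((t : ℝ) / (T : ℝ) : ℝ) : 𝕜)‖ < 1 := by
          rw [RCLike.norm_ofReal, abs_of_nonneg (div_nonneg (le_of_lt t.2.1) hT0.le)]
          exact (div_lt_one hT0).2 hlt
        have := tendsto_pow_atTop_nhds_zero_of_norm_lt_one hnorm
        simpa using (this.const_mul (c t))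
    simpa [Finset.sum_ite_eq' c.support T (fun t => c t), hTmem] using this
  have hev : ∀ᶠ n in atTop, y n ≠ 0 := hlim.eventually_ne hcT
  obtain ⟨N, hN⟩ := eventually_atTop.1 hev
  apply Set.Finite.subset (Set.finite_Iio N)
  intro n hn
  by_contra hlt
  simp only [Set.mem_Iio, not_lt] at hlt
  apply hN n hlt
  have hx : (∑ t ∈ c.support, c t * ((t : ℝ) : 𝕜) ^ n) = (((T : ℝ) : 𝕜)) ^ n * y n := by
    rw [hy, Finset.mul_sum]
    apply Finset.sum_congr rfl
    intro t _
    rw [← mul_assoc, mul_comm ((((T : ℝ)) : 𝕜) ^ n), mul_assoc]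
    congr 1
    rw [← mul_pow, ← RCLike.ofReal_mul]
    have : (T : ℝ) * ((t : ℝ) / (T : ℝ)) = (t : ℝ) := by field_simp
    rw [this]
  have hxz : (∑ t ∈ c.support, c t * ((t : ℝ) : 𝕜) ^ n) = 0 := hn
  rw [hx] at hxz
  have hTn : (((T : ℝ) : 𝕜)) ^ n ≠ 0 := by
    apply pow_ne_zero
    exact_mod_cast ne_of_gt hT0
  exact (mul_eq_zero.1 hxz).resolve_left hTn

/-- Membership in `ℓ_p` of any combination. -/
lemma mem_lp (p : ℝ≥0∞) (hp : 0 < p) (c : Set.Ioo (0:ℝ) 1 →₀ 𝕜) :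
    InLp p (fun n => ∑ t ∈ c.support, c t * ((t : ℝ) : 𝕜) ^ n) := by
  by_cases hc : c = 0
  · subst hc
    simp only [Finsupp.support_zero, Finset.sum_empty]
    unfold InLp
    split_ifs with h
    · exact ⟨0, fun n => by simp⟩
    · have hq : p.toReal ≠ 0 := (ENNReal.toReal_pos hp.ne' h).ne'
      simpa [Real.zero_rpow hq] using summable_zero
  · have hne : c.support.Nonempty := Finsupp.support_nonempty_iff.2 hc
    set T := c.support.max' hne with hT
    have hT0 : (0:ℝ) < (T : ℝ) := T.2.1
    have hT1 : (T : ℝ) < 1 := T.2.2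
    set C : ℝ := ∑ t ∈ c.support, ‖c t‖ with hC
    have hC0 : 0 ≤ C := Finset.sum_nonneg fun t _ => norm_nonneg _
    have hbound : ∀ n, ‖∑ t ∈ c.support, c t * ((t : ℝ) : 𝕜) ^ n‖ ≤ C * (T : ℝ) ^ n := by
      intro n
      calc ‖∑ t ∈ c.support, c t * ((t : ℝ) : 𝕜) ^ n‖
          ≤ ∑ t ∈ c.support, ‖c t * ((t : ℝ) : 𝕜) ^ n‖ := norm_sum_le _ _
        _ ≤ ∑ t ∈ c.support, ‖c t‖ * (T : ℝ) ^ n := by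
            apply Finset.sum_le_sum
            intro t ht
            rw [norm_mul, norm_pow, RCLike.norm_ofReal, abs_of_nonneg (le_of_lt t.2.1)]
            apply mul_le_mul_of_nonneg_left _ (norm_nonneg _)
            exact pow_le_pow_left₀ (le_of_lt t.2.1) (c.support.le_max' t ht) n
        _ = C * (T : ℝ) ^ n := by rw [hC, Finset.sum_mul]
    unfold InLp
    split_ifs with h
    · refine ⟨C, fun n => (hbound n).trans ?_⟩
      calc C * (T : ℝ) ^ n ≤ C * 1 := by
            apply mul_le_mul_of_nonneg_left _ hC0
            exact pow_le_one₀ hT0.le hT1.le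
        _ = C := mul_one C
    · set q := p.toReal with hq
      have hq0 : 0 < q := ENNReal.toReal_pos hp.ne' h
      have hs : Summable (fun n : ℕ => (C ^ q) * ((T : ℝ) ^ q) ^ n) := by
        apply Summable.mul_left
        apply summable_geometric_of_lt_one (Real.rpow_nonneg hT0.le q)
        exact Real.rpow_lt_one hT0.le hT1 hq0
      show Summable fun n => ‖∑ t ∈ c.support, c t * ((t : ℝ) : 𝕜) ^ n‖ ^ q
      refine Summable.of_nonneg_of_le (fun n => Real.rpow_nonneg (norm_nonneg _) q)
        (fun n => ?_) hs
      calc ‖∑ t ∈ c.support, c t * ((t : ℝ) : 𝕜) ^ n‖ ^ q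
            ≤ (C * (T : ℝ) ^ n) ^ q := by
              apply Real.rpow_le_rpow (norm_nonneg _) (hbound n) hq0.le
          _ = C ^ q * ((T : ℝ) ^ q) ^ n := by
              rw [Real.mul_rpow hC0 (pow_nonneg hT0.le n)]
              congr 1
              rw [← Real.rpow_natCast (T : ℝ) n, ← Real.rpow_natCast ((T:ℝ) ^ q) n,
                ← Real.rpow_mul hT0.le, ← Real.rpow_mul hT0.le, mul_comm]

lemma indep : LinearIndependent 𝕜 (f (𝕜 := 𝕜)) := by
  rw [linearIndependent_iff]
  intro l hl
  by_contra hne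
  have hfin := key l hne
  have hall : ∀ n, (∑ t ∈ l.support, l t * ((t : ℝ) : 𝕜) ^ n) = 0 := by
    intro n
    rw [Finsupp.linearCombination_apply] at hl
    have h2 := congrFun hl n
    rw [eval_comb] at h2
    simpa using h2
  have huniv : {n : ℕ | (∑ t ∈ l.support, l t * ((t : ℝ) : 𝕜) ^ n) = 0} = Set.univ :=
    Set.eq_univ_of_forall hall
  rw [huniv] at hfin
  exact Set.infinite_univ hfin

end Stmt4Aux

set_option maxHeartbeats 1000000 in
/-- For each `p ∈ (0,∞]` there exists a `𝕜`-subspace `V` of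
`𝕜^ℕ` contained in `ℓ_p`, of dimension `𝔠`, all of whose nonzero elements
have only finitely many zero coordinates.  In particular `Z(ℓ_p)` is maximal
lineable. -/
theorem stmt4 {𝕜 : Type} [RCLike 𝕜] (p : ℝ≥0∞) (hp : 0 < p) :
    ∃ V : Submodule 𝕜 (ℕ → 𝕜),
      (↑V : Set (ℕ → 𝕜)) ⊆ {x | InLp p x} ∧
      Module.rank 𝕜 ↥V = Cardinal.continuum ∧
      ∀ x ∈ V, x ≠ 0 → {n : ℕ | x n = 0}.Finite := by
  classical
  have hind : LinearIndependent 𝕜 (Stmt4Aux.f (𝕜 := 𝕜)) := Stmt4Aux.indep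
  refine ⟨Submodule.span 𝕜 (Set.range (Stmt4Aux.f (𝕜 := 𝕜))), ?_, ?_, ?_⟩
  · intro x hx
    rw [SetLike.mem_coe, Finsupp.mem_span_range_iff_exists_finsupp] at hx
    obtain ⟨c, rfl⟩ := hx
    have heq : (c.sum fun i a => a • (Stmt4Aux.f i : ℕ → 𝕜)) =
        fun n => ∑ t ∈ c.support, c t * ((t : ℝ) : 𝕜) ^ n := by
      funext n; exact Stmt4Aux.eval_comb c n
    show InLp p _
    rw [heq]
    exact Stmt4Aux.mem_lp p hp c
  · rw [rank_span hind, Cardinal.mk_range_eq _ hind.injective]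
    exact Cardinal.mk_Ioo_real one_pos
  · intro x hx hxne
    rw [Finsupp.mem_span_range_iff_exists_finsupp] at hx
    obtain ⟨c, rfl⟩ := hx
    have hcne : c ≠ 0 := by
      rintro rfl
      exact hxne (by simp [Finsupp.sum_zero_index])
    have hfin := Stmt4Aux.key c hcne
    have heq : {n : ℕ | (c.sum fun i a => a • (Stmt4Aux.f i : ℕ → 𝕜)) n = 0} =
        {n : ℕ | (∑ t ∈ c.support, c t * ((t : ℝ) : 𝕜) ^ n) = 0} := by
      ext n; rw [Set.mem_setOf_eq, Stmt4Aux.eval_comb c n]; rfl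
    exact heq ▸ hfin
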